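/- If every nonzero element of the i-th contraction space C_i(T) of a tensor T has tensor rank at least d, and T is i-concise with dim V_i = k, then the tensor rank of T is at least the minimum length N_q(k,d) of a linear code over F_q of dimension k and minimum Hamming distance at least d. -/

import Mathlib

open scoped TensorProduct
open PiTensorProduct

/-- The contraction of a `t`-fold tensor by a dual vector in the `i`-th factor,
as a multilinear map on the factors. -/
noncomputable def contrMultilinear {ι : Type*} [Fintype ι] [DecidableEq ι]
    {F : Type*} [Field F] {V : ι → Type*} [∀ k, AddCommGroup (V k)] [∀ k, Module F (V k)]
    (i : ι) (f : Module.Dual F (V i)) :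
    MultilinearMap F V (⨂[F] k : {k // k ≠ i}, V k) where
  toFun v := f (v i) • (tprod F (s := fun k : {k // k ≠ i} => V k.1)) (fun k => v k.1)
  map_update_add' := by
    intro _ v j x y
    by_cases h : j = i
    · subst h
      have hupd : ∀ z : V j, (fun k : {k // k ≠ j} => Function.update v j z k.1)
          = fun k : {k // k ≠ j} => v k.1 := by
        intro z; funext k; exact Function.update_of_ne k.2 z v
      simp only [Function.update_self, hupd, map_add, add_smul]
    · have h1 : ∀ z : V j, Function.update v j z i = v i :=
        fun z => Function.update_of_ne (Ne.symm h) z v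
      have h2 : ∀ z : V j, (fun k : {k // k ≠ i} => Function.update v j z k.1)
          = Function.update (fun k : {k // k ≠ i} => v k.1) ⟨j, h⟩ z := by
        intro z; funext k
        rcases eq_or_ne k (⟨j, h⟩ : {k // k ≠ i}) with rfl | hk
        · simp
        · have : k.1 ≠ j := fun hkj => hk (Subtype.ext hkj)
          rw [Function.update_of_ne this, Function.update_of_ne hk]
      simp only [h1, h2, MultilinearMap.map_update_add, smul_add]
  map_update_smul' := by
    intro _ v j c x
    by_cases h : j = i
    · subst h
      have hupd : ∀ z : V j, (fun k : {k // k ≠ j} => Function.update v j z k.1)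
          = fun k : {k // k ≠ j} => v k.1 := by
        intro z; funext k; exact Function.update_of_ne k.2 z v
      simp only [Function.update_self, hupd, map_smul, smul_assoc]
    · have h1 : ∀ z : V j, Function.update v j z i = v i :=
        fun z => Function.update_of_ne (Ne.symm h) z v
      have h2 : ∀ z : V j, (fun k : {k // k ≠ i} => Function.update v j z k.1)
          = Function.update (fun k : {k // k ≠ i} => v k.1) ⟨j, h⟩ z := by
        intro z; funext k
        rcases eq_or_ne k (⟨j, h⟩ : {k // k ≠ i}) with rfl | hk
        · simp
        · have : k.1 ≠ j := fun hkj => hk (Subtype.ext hkj)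
          rw [Function.update_of_ne this, Function.update_of_ne hk]
      simp only [h1, h2, MultilinearMap.map_update_smul]
      exact smul_comm _ _ _

/-- Contraction of the `i`-th factor of a `t`-fold tensor by a dual vector `f ∈ Vᵢ^∨`. -/
noncomputable def contr {ι : Type*} [Fintype ι] [DecidableEq ι]
    {F : Type*} [Field F] {V : ι → Type*} [∀ k, AddCommGroup (V k)] [∀ k, Module F (V k)]
    (i : ι) (f : Module.Dual F (V i)) :
    (⨂[F] k, V k) →ₗ[F] ⨂[F] k : {k // k ≠ i}, V k :=
  PiTensorProduct.lift (contrMultilinear i f)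

/-- The tensor rank of a tensor: the minimum number `R` such that the tensor is a sum of
`R` pure tensors. -/
noncomputable def tensorRank {ι : Type*} [Fintype ι] {F : Type*} [Field F]
    {V : ι → Type*} [∀ k, AddCommGroup (V k)] [∀ k, Module F (V k)]
    (T : ⨂[F] k, V k) : ℕ :=
  sInf {R | ∃ v : Fin R → Π k, V k, T = ∑ j, tprod F (v j)}

/-- `N_q(k, d)`: the minimum possible length of a linear code over the field `F` of
dimension `k` and minimum Hamming distance at least `d`. -/
noncomputable def minCodeLength (F : Type*) [Field F] [DecidableEq F] (k d : ℕ) : ℕ :=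
  sInf {R | ∃ C : Submodule F (Fin R → F), Module.finrank F C = k ∧
    ∀ c ∈ C, c ≠ 0 → d ≤ hammingNorm c}


section Aux
variable {ι : Type*} [Fintype ι] [DecidableEq ι]
    {F : Type*} [Field F] {V : ι → Type*} [∀ k, AddCommGroup (V k)] [∀ k, Module F (V k)]

omit [Fintype ι] in
lemma smul_tprod_eq (i₀ : ι) (c : F) (u : Π k, V k) :
    c • tprod F u = tprod F (Function.update u i₀ (c • u i₀)) := by
  have h := MultilinearMap.map_update_smul (tprod F (s := V)) u i₀ c (u i₀)
  rw [Function.update_eq_self] at h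
  exact h.symm

lemma exists_decomp [Nonempty ι] (T : ⨂[F] k, V k) :
    ∃ (R : ℕ) (v : Fin R → Π k, V k), T = ∑ j, tprod F (v j) := by
  have hT : T ∈ Submodule.span F (Set.range (tprod F (s := V))) := by
    rw [PiTensorProduct.span_tprod_eq_top]; trivial
  obtain ⟨n, f, g, hsum⟩ := Submodule.mem_span_set'.1 hT
  choose u hu using fun j => (g j).2
  obtain ⟨i₀⟩ := ‹Nonempty ι›
  refine ⟨n, fun j => Function.update (u j) i₀ (f j • u j i₀), ?_⟩
  rw [← hsum]
  refine Finset.sum_congr rfl fun j _ => ?_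
  rw [← hu j, smul_tprod_eq i₀]

omit [DecidableEq ι] in
lemma tensorRank_finset_le {J : Type*} (s : Finset J) (u : J → Π k, V k) :
    tensorRank (∑ j ∈ s, tprod F (u j)) ≤ s.card := by
  apply Nat.sInf_le
  refine ⟨fun m => u (s.equivFin.symm m), ?_⟩
  rw [← Finset.sum_attach s (fun j => tprod F (u j))]
  exact Fintype.sum_equiv s.equivFin _ _ (fun a => by simp)

end Aux

/-- If every nonzero element of the `i`-th contraction space `C_i(T)` of a
tensor `T` has tensor rank at least `d`, and `T` is `i`-concise with `dim V_i = k`, then the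
tensor rank of `T` is at least `N_q(k, d)`. -/
theorem stmt_4 {t : ℕ} {F : Type*} [Field F] [Fintype F] [DecidableEq F]
    {V : Fin t → Type*}
    [∀ k, AddCommGroup (V k)] [∀ k, Module F (V k)] [∀ k, FiniteDimensional F (V k)]
    (T : ⨂[F] k, V k) (i : Fin t) (k d : ℕ)
    (hk : Module.finrank F (V i) = k)
    (hconcise : Module.finrank F
        (Submodule.span F {S | ∃ f : Module.Dual F (V i), S = contr i f T})
      = Module.finrank F (V i))
    (hd : ∀ f : Module.Dual F (V i), contr i f T ≠ 0 → d ≤ tensorRank (contr i f T)) :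
    minCodeLength F k d ≤ tensorRank T := by
  classical
  have hne : {R | ∃ v : Fin R → Π k, V k, T = ∑ j, tprod F (v j)}.Nonempty := by
    have : Nonempty (Fin t) := ⟨i⟩
    obtain ⟨R, v, hv⟩ := exists_decomp T
    exact ⟨R, v, hv⟩
  set R := tensorRank T with hR
  obtain ⟨v, hv⟩ : ∃ v : Fin R → Π k, V k, T = ∑ j, tprod F (v j) := Nat.sInf_mem hne
  set w : Fin R → ⨂[F] k : {k // k ≠ i}, V k :=
    fun j => tprod F fun k => v j k.1 with hw
  set μ : (Fin R → F) →ₗ[F] ⨂[F] k : {k // k ≠ i}, V k :=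
    ∑ j, LinearMap.smulRight (LinearMap.proj j) (w j) with hμ
  have hμa : ∀ c : Fin R → F, μ c = ∑ j, c j • w j := by
    intro c; simp [hμ, LinearMap.sum_apply]
  set φ : Module.Dual F (V i) →ₗ[F] (Fin R → F) :=
    LinearMap.pi (fun j => LinearMap.applyₗ (v j i)) with hφ
  have hφa : ∀ (f : Module.Dual F (V i)) j, φ f j = f (v j i) := fun f j => rfl
  set ψ := μ ∘ₗ φ with hψdef
  have hψa : ∀ f, ψ f = contr i f T := by
    intro f
    rw [hv, map_sum]
    have h0 : ψ f = μ (φ f) := rfl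
    rw [h0, hμa]
    refine (Finset.sum_congr rfl fun j _ => ?_).symm
    rw [contr, PiTensorProduct.lift.tprod]
    rfl
  have hrange : Submodule.span F {S | ∃ f : Module.Dual F (V i), S = contr i f T}
      = LinearMap.range ψ := by
    have hs : {S | ∃ f : Module.Dual F (V i), S = contr i f T} = Set.range ψ := by
      ext S
      constructor
      · rintro ⟨f, rfl⟩; exact ⟨f, hψa f⟩
      · rintro ⟨f, rfl⟩; exact ⟨f, hψa f⟩
    rw [hs, ← LinearMap.coe_range, Submodule.span_eq]
  have hinj : Function.Injective ψ := by
    have h1 : Module.finrank F (LinearMap.range ψ)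
        = Module.finrank F (Module.Dual F (V i)) := by
      rw [← hrange, hconcise, Subspace.dual_finrank_eq]
    have h2 := LinearMap.finrank_range_add_finrank_ker ψ
    rw [h1] at h2
    have h3 : Module.finrank F (LinearMap.ker ψ) = 0 := by omega
    rw [← LinearMap.ker_eq_bot]
    exact Submodule.finrank_eq_zero.mp h3
  have hφinj : Function.Injective φ := by
    intro f g hfg
    apply hinj
    show μ (φ f) = μ (φ g)
    rw [hfg]
  apply Nat.sInf_le
  refine ⟨LinearMap.range φ, ?_, ?_⟩
  · rw [LinearMap.finrank_range_of_inj hφinj, Subspace.dual_finrank_eq, hk]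
  · rintro c hc hc0
    obtain ⟨f, rfl⟩ := hc
    have hf0 : contr i f T ≠ 0 := by
      rw [← hψa]
      intro h
      apply hc0
      have hfz : f = 0 := hinj (by simpa using h)
      simp [hfz]
    have hdle : d ≤ tensorRank (contr i f T) := hd f hf0
    have hwt : 0 < hammingNorm (φ f) := by
      rcases Nat.eq_zero_or_pos (hammingNorm (φ f)) with h | h
      · exact absurd (hammingNorm_eq_zero.mp h) hc0
      · exact h
    by_cases hne2 : Nonempty {k : Fin t // k ≠ i}
    · obtain ⟨i'⟩ := hne2
      refine le_trans hdle ?_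
      have hrepr : contr i f T = ∑ j ∈ Finset.univ.filter (fun j => φ f j ≠ 0),
          tprod F (Function.update (fun k : {k // k ≠ i} => v j k.1) i'
            (φ f j • v j i'.1)) := by
        rw [← hψa]
        have h0 : ψ f = μ (φ f) := rfl
        rw [h0, hμa]
        rw [← Finset.sum_filter_of_ne (p := fun j => φ f j ≠ 0)
          (by intro x _ hx h0; exact hx (by simp [h0]))]
        refine Finset.sum_congr rfl fun j _ => ?_
        exact smul_tprod_eq i' (φ f j) _
      rw [hrepr]
      refine le_trans (tensorRank_finset_le _ _) ?_
      simp [hammingNorm]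
    · have hie : IsEmpty {k : Fin t // k ≠ i} := not_nonempty_iff.mp hne2
      have hfd : FiniteDimensional F (⨂[F] k : {k // k ≠ i}, V k) :=
        Module.Finite.equiv (PiTensorProduct.isEmptyEquiv {k : Fin t // k ≠ i}
          (s := fun k => V k.1)).symm
      have hamb : Module.finrank F (⨂[F] k : {k // k ≠ i}, V k) = 1 := by
        rw [(PiTensorProduct.isEmptyEquiv {k : Fin t // k ≠ i}
          (s := fun k => V k.1)).finrank_eq, Module.finrank_self]
      have hkpos : 0 < Module.finrank F (Module.Dual F (V i)) := by
        have hfne : f ≠ 0 := by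
          intro h; apply hc0; simp [h]
        have : Nontrivial (Module.Dual F (V i)) := nontrivial_of_ne f 0 hfne
        exact Module.finrank_pos
      have hrtop : LinearMap.range ψ = ⊤ := by
        apply Submodule.eq_top_of_finrank_eq
        have h1 : Module.finrank F (LinearMap.range ψ)
            = Module.finrank F (Module.Dual F (V i)) := by
          rw [← hrange, hconcise, Subspace.dual_finrank_eq]
        have h2 : Module.finrank F (LinearMap.range ψ)
            ≤ Module.finrank F (⨂[F] k : {k : Fin t // k ≠ i}, V k.1) :=
          Submodule.finrank_le _
        omega
      set e : Π k : {k : Fin t // k ≠ i}, V k.1 := fun k => isEmptyElim k with he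
      obtain ⟨f₀, hf₀⟩ : ∃ f₀, ψ f₀ = tprod F e := by
        have hm : tprod F (s := fun k : {k : Fin t // k ≠ i} => V k.1) e
            ∈ LinearMap.range ψ := by rw [hrtop]; trivial
        exact hm
      have htne : tprod F (s := fun k : {k : Fin t // k ≠ i} => V k.1) e ≠ 0 := by
        intro h
        have h2 := congrArg (PiTensorProduct.isEmptyEquiv {k : Fin t // k ≠ i}) h
        rw [PiTensorProduct.isEmptyEquiv_apply_tprod] at h2
        simp at h2
      have hd1 : d ≤ 1 := by
        have h0 : contr i f₀ T ≠ 0 := by rw [← hψa, hf₀]; exact htne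
        refine le_trans (hd f₀ h0) ?_
        rw [← hψa, hf₀]
        apply Nat.sInf_le
        refine ⟨fun _ : Fin 1 => e, ?_⟩
        rw [Fin.sum_univ_one]
      omega
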